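/- There exists a countable bipartite graph H (i.e., a countable graph whose vertex set can be partitioned into two independent sets) that has property FIN. -/
import Mathlib

/-- There is an increasing path on `k` vertices in `G` under the vertex labeling `φ`. -/
def IncrPathOn {V : Type*} (G : SimpleGraph V) (φ : V → ℕ) (k : ℕ) : Prop :=
  ∃ w : ℕ → V, (∀ i j, i < k → j < k → w i = w j → i = j) ∧
    ∀ i, i + 1 < k → G.Adj (w i) (w (i + 1)) ∧ φ (w i) < φ (w (i + 1))

/-- There is an infinite increasing path in `G` under the vertex labeling `φ`. -/
def InfIncrPath {V α : Type*} [Preorder α] (G : SimpleGraph V) (φ : V → α) : Prop :=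
  ∃ w : ℕ → V, Function.Injective w ∧ ∀ i, G.Adj (w i) (w (i + 1)) ∧ φ (w i) < φ (w (i + 1))

/-- `V(G)` can be partitioned into `k` independent sets `V_1, …, V_k` such that every vertex
of `V_j` has only finitely many neighbours in `V_1 ∪ ⋯ ∪ V_{j-1}`. -/
def HasChiStarPartition {V : Type*} (G : SimpleGraph V) (k : ℕ) : Prop :=
  ∃ P : V → Fin k, (∀ u v, G.Adj u v → P u ≠ P v) ∧
    ∀ v, {u | G.Adj v u ∧ (P u : ℕ) < (P v : ℕ)}.Finite

/-- Property `FIN`: every bijective labeling of `V` by `ℕ` yields increasing paths on any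
number of vertices, but some bijective labeling yields no infinite increasing path. -/
def FIN {V : Type*} (G : SimpleGraph V) : Prop :=
  (∀ φ : V ≃ ℕ, ∀ k : ℕ, IncrPathOn G (fun v => φ v) k) ∧
  (∃ φ : V ≃ ℕ, ¬ InfIncrPath G (fun v => φ v))

namespace Stmt9Aux

abbrev P : Type := ℕ × List ℕ

def e : ℕ ≃ P := (Denumerable.eqv P).symm

/-- `n` is a child of `m` in component `(e m).1`, with depth bound. -/
def R (m n : ℕ) : Prop :=
  (e m).1 = (e n).1 ∧ ∃ a, (e n).2 = a :: (e m).2 ∧ (e n).2.length < (e m).1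

def G : SimpleGraph ℕ := SimpleGraph.fromRel R

lemma exists_gt_of_injective {f : ℕ → ℕ} (hf : Function.Injective f) (b : ℕ) :
    ∃ a, b < f a := by
  by_contra h
  push_neg at h
  have h1 : Set.range f ⊆ Set.Iic b := by rintro _ ⟨a, rfl⟩; exact h a
  exact (Set.infinite_range_of_injective hf) ((Set.finite_Iic b).subset h1)

lemma adj_iff {m n : ℕ} : G.Adj m n ↔ m ≠ n ∧ (R m n ∨ R n m) :=
  SimpleGraph.fromRel_adj R m n

/-- Bipartiteness. -/
lemma bipartite {u v : ℕ} (h : G.Adj u v) :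
    (Even (e u).2.length ∧ ¬ Even (e v).2.length) ∨
      (¬ Even (e u).2.length ∧ Even (e v).2.length) := by
  have hlen : (e v).2.length = (e u).2.length + 1 ∨
      (e u).2.length = (e v).2.length + 1 := by
    rcases (adj_iff.1 h).2 with ⟨-, a, ha, -⟩ | ⟨-, a, ha, -⟩
    · left; rw [ha]; simp
    · right; rw [ha]; simp
  by_cases he : Even (e u).2.length
  · refine Or.inl ⟨he, ?_⟩
    rcases hlen with h1 | h1
    · rw [h1, Nat.even_add_one]; exact not_not_intro he
    · intro hv; rw [h1, Nat.even_add_one] at he; exact he hv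
  · refine Or.inr ⟨he, ?_⟩
    rcases hlen with h1 | h1
    · rw [h1, Nat.even_add_one]
      exact he
    · rw [h1, Nat.even_add_one] at he
      exact not_not.1 he

lemma key (φ : ℕ ≃ ℕ) (k : ℕ) (l : List ℕ) :
    ∃ a : ℕ, φ (e.symm (k, l)) < φ (e.symm (k, a :: l)) := by
  have hinj : Function.Injective (fun a : ℕ => φ (e.symm (k, a :: l))) := by
    intro a b hab
    have := e.symm.injective (φ.injective hab)
    simpa using congrArg (fun p : P => p.2.headI) this
  exact exists_gt_of_injective hinj _

noncomputable def g (φ : ℕ ≃ ℕ) (k : ℕ) (l : List ℕ) : ℕ := (key φ k l).choose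

lemma g_spec (φ : ℕ ≃ ℕ) (k : ℕ) (l : List ℕ) :
    φ (e.symm (k, l)) < φ (e.symm (k, g φ k l :: l)) := (key φ k l).choose_spec

noncomputable def L (φ : ℕ ≃ ℕ) (k : ℕ) : ℕ → List ℕ
  | 0 => []
  | n + 1 => g φ k (L φ k n) :: L φ k n

lemma L_succ (φ : ℕ ≃ ℕ) (k n : ℕ) :
    L φ k (n + 1) = g φ k (L φ k n) :: L φ k n := rfl

lemma L_len (φ : ℕ ≃ ℕ) (k : ℕ) : ∀ n, (L φ k n).length = n := by
  intro n; induction n with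
  | zero => rfl
  | succ n ih => rw [L_succ]; simp [ih]

/-- Every bijective labeling admits increasing paths on `k` vertices. -/
lemma long_paths (φ : ℕ ≃ ℕ) (k : ℕ) : IncrPathOn G (fun v => φ v) k := by
  refine ⟨fun i => e.symm (k, L φ k i), ?_, ?_⟩
  · intro i j _ _ hij
    have h1 : (k, L φ k i) = ((k, L φ k j) : P) := e.symm.injective hij
    have h2 : L φ k i = L φ k j := congrArg Prod.snd h1
    simpa [L_len] using congrArg List.length h2
  · intro i hi
    have hne : e.symm ((k, L φ k i) : P) ≠ e.symm (k, L φ k (i + 1)) := by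
      intro hEq
      have h1 : L φ k i = L φ k (i + 1) := congrArg Prod.snd (e.symm.injective hEq)
      have h2 : i = i + 1 := by simpa [L_len] using congrArg List.length h1
      omega
    have hR : R (e.symm (k, L φ k i)) (e.symm (k, L φ k (i + 1))) := by
      refine ⟨by simp, g φ k (L φ k i), ?_, ?_⟩
      · simp [L_succ]
      · simp [L_len]; omega
    refine ⟨adj_iff.2 ⟨hne, Or.inl hR⟩, ?_⟩
    have := g_spec φ k (L φ k i)
    simpa [L_succ] using this

/-- There is no infinite injective adjacency path in `G` at all. -/
lemma no_ray (w : ℕ → ℕ) (hinj : Function.Injective w)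
    (hadj : ∀ i, G.Adj (w i) (w (i + 1))) : False := by
  have hk : ∀ i, (e (w i)).1 = (e (w 0)).1 := by
    intro i; induction i with
    | zero => rfl
    | succ i ih =>
      rcases (adj_iff.1 (hadj i)).2 with ⟨h1, -⟩ | ⟨h1, -⟩
      · rw [← h1, ih]
      · rw [h1, ih]
  set K := (e (w 0)).1 with hK
  have step : ∀ i, (∃ a, (e (w (i + 1))).2 = a :: (e (w i)).2 ∧
        (e (w (i + 1))).2.length < K) ∨
      (∃ a, (e (w i)).2 = a :: (e (w (i + 1))).2 ∧ (e (w i)).2.length < K) := by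
    intro i
    rcases (adj_iff.1 (hadj i)).2 with ⟨-, a, ha, hb⟩ | ⟨-, a, ha, hb⟩
    · exact Or.inl ⟨a, ha, by rwa [hk i] at hb⟩
    · exact Or.inr ⟨a, ha, by rwa [hk (i + 1)] at hb⟩
  have persist : ∀ i, (∃ a, (e (w (i + 1))).2 = a :: (e (w i)).2 ∧
        (e (w (i + 1))).2.length < K) →
      (∃ a, (e (w (i + 2))).2 = a :: (e (w (i + 1))).2 ∧
        (e (w (i + 2))).2.length < K) := by
    rintro i ⟨a, ha, -⟩
    rcases step (i + 1) with h | ⟨b, hb, -⟩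
    · exact h
    · exfalso
      have hc : a :: (e (w i)).2 = b :: (e (w (i + 2))).2 := by rw [← ha, hb]
      have h2 : (e (w i)).2 = (e (w (i + 2))).2 := by
        simpa using congrArg List.tail hc
      have h1 : (e (w i)).1 = (e (w (i + 2))).1 := by rw [hk i, hk (i + 2)]
      have h3 : e (w i) = e (w (i + 2)) := Prod.ext h1 h2
      have h4 : i = i + 2 := hinj (e.injective h3)
      omega
  by_cases hdown : ∃ i a, (e (w (i + 1))).2 = a :: (e (w i)).2 ∧
      (e (w (i + 1))).2.length < K
  · obtain ⟨i, a0, ha0⟩ := hdown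
    have all : ∀ j, ∃ a, (e (w (i + j + 1))).2 = a :: (e (w (i + j))).2 ∧
        (e (w (i + j + 1))).2.length < K := by
      intro j; induction j with
      | zero => exact ⟨a0, ha0⟩
      | succ j ih => exact persist (i + j) ih
    have mono : ∀ j, (e (w (i + j))).2.length = (e (w i)).2.length + j := by
      intro j; induction j with
      | zero => simp
      | succ j ih =>
        obtain ⟨a, ha, -⟩ := all j
        have hidx : i + (j + 1) = i + j + 1 := by omega
        rw [hidx, ha]
        simp only [List.length_cons, ih]
        omega
    obtain ⟨-, -, hb⟩ := all K
    have h1 := mono (K + 1)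
    have hidx : i + (K + 1) = i + K + 1 := by omega
    rw [hidx] at h1
    omega
  · push_neg at hdown
    have dec : ∀ i, (e (w (i + 1))).2.length < (e (w i)).2.length := by
      intro i
      rcases step i with ⟨a, ha, hb⟩ | ⟨a, ha, -⟩
      · have := hdown i a ha; omega
      · rw [ha]; simp
    have hbnd : ∀ n, (e (w n)).2.length + n ≤ (e (w 0)).2.length := by
      intro n; induction n with
      | zero => simp
      | succ n ih => have := dec n; omega
    have := hbnd ((e (w 0)).2.length + 1)
    omega

end Stmt9Aux

theorem stmt9 :
    ∃ G : SimpleGraph ℕ,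
      (∃ A : Set ℕ, ∀ u v : ℕ, G.Adj u v → ((u ∈ A ∧ v ∉ A) ∨ (u ∉ A ∧ v ∈ A))) ∧
      FIN G := by
  refine ⟨Stmt9Aux.G, ⟨{n | Even (Stmt9Aux.e n).2.length},
    fun u v h => Stmt9Aux.bipartite h⟩, ?_⟩
  constructor
  · exact fun φ k => Stmt9Aux.long_paths φ k
  · exact ⟨Equiv.refl ℕ, fun ⟨w, hinj, hw⟩ =>
      Stmt9Aux.no_ray w hinj fun i => (hw i).1⟩
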